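/- Fix d ≥ 1, T > 0 and a bounded open set Ω ⊂ ℝ^d; write Ω_T = Ω × (0,T). For γ > 1, let n = n_γ : ℝ^d × [0,T] → [0, n_M] be a C¹ function supported in Ω for every t, and set p := n^γ. Assume the uniform bounds: ∫∫_{Ω_T} |∂_t n| dx dt ≤ C₀ and ∫∫_{Ω_T} n |∂_t p| dx dt ≤ C₀. Then ∫∫_{Ω_T} |∂_t p| dx dt ≤ γ 2^{1−γ} C₀ + 2 C₀; in particular there is a constant C, independent of γ > 1, such that ∫∫_{Ω_T} |∂_t p_γ| dx dt ≤ C. -/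

import Mathlib

open MeasureTheory Real Set Filter Topology
noncomputable section

/-- the uniform `L¹(Ω_T)` bound on `∂_t p_γ` for `p = n^γ`:
`∫∫ |∂_t p| ≤ γ 2^{1−γ} C₀ + 2 C₀`, whose right-hand side is bounded uniformly
in `γ > 1`. -/
theorem stmt19 (d : ℕ) (hd : 1 ≤ d) (T : ℝ) (hT : 0 < T)
    (Ω : Set (EuclideanSpace ℝ (Fin d))) (hΩo : IsOpen Ω) (hΩb : Bornology.IsBounded Ω)
    (n_M C₀ : ℝ) (γ : ℝ) (hγ : 1 < γ)
    (n : EuclideanSpace ℝ (Fin d) → ℝ → ℝ)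
    (hC1 : ContDiff ℝ 1 (fun q : (EuclideanSpace ℝ (Fin d)) × ℝ => n q.1 q.2))
    (hrange : ∀ x t, 0 ≤ n x t ∧ n x t ≤ n_M)
    (hsupp : ∀ t ∈ Icc (0:ℝ) T, (Function.support fun x => n x t) ⊆ Ω)
    (hdtn : (∫ t in Ioo (0:ℝ) T, ∫ x in Ω, |deriv (fun s => n x s) t|) ≤ C₀)
    (hndtp : (∫ t in Ioo (0:ℝ) T, ∫ x in Ω,
        n x t * |deriv (fun s => n x s ^ γ) t|) ≤ C₀) :
    (∫ t in Ioo (0:ℝ) T, ∫ x in Ω, |deriv (fun s => n x s ^ γ) t|)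
      ≤ γ * (2:ℝ) ^ (1 - γ) * C₀ + 2 * C₀ := by
  have hγ0 : (0:ℝ) < γ := by linarith
  set F : EuclideanSpace ℝ (Fin d) × ℝ → ℝ := fun q => n q.1 q.2 with hFdef
  have hFd : Differentiable ℝ F := hC1.differentiable one_ne_zero
  set D : EuclideanSpace ℝ (Fin d) × ℝ → ℝ := fun q => fderiv ℝ F q ((0 : EuclideanSpace ℝ (Fin d)), (1 : ℝ)) with hDdef
  have hD : ∀ x t, HasDerivAt (fun s => n x s) (D (x, t)) t := by
    intro x t
    have h1 : HasDerivAt (fun s : ℝ => ((x, s) : EuclideanSpace ℝ (Fin d) × ℝ)) ((0 : EuclideanSpace ℝ (Fin d)), (1 : ℝ)) t :=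
      (hasDerivAt_const t x).prodMk (hasDerivAt_id t)
    exact (hFd (x, t)).hasFDerivAt.comp_hasDerivAt t h1
  have hDcont : Continuous D :=
    (hC1.continuous_fderiv one_ne_zero).clm_apply continuous_const
  set P : EuclideanSpace ℝ (Fin d) × ℝ → ℝ := fun q => D q * γ * n q.1 q.2 ^ (γ - 1) with hPdef
  have hP : ∀ x t, HasDerivAt (fun s => n x s ^ γ) (P (x, t)) t := fun x t =>
    (hD x t).rpow_const (Or.inr hγ.le)
  have hPcont : Continuous P :=
    (hDcont.mul continuous_const).mul
      (hC1.continuous.rpow_const fun q => Or.inr (by linarith))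
  have e1 : ∀ x t, deriv (fun s => n x s) t = D (x, t) := fun x t => (hD x t).deriv
  have e2 : ∀ x t, deriv (fun s => n x s ^ γ) t = P (x, t) := fun x t => (hP x t).deriv
  simp only [e1] at hdtn
  simp only [e2] at hndtp ⊢
  -- pointwise bound
  have key : ∀ x t, |P (x, t)| ≤ γ * (2:ℝ) ^ (1 - γ) * |D (x, t)|
      + 2 * (n x t * |P (x, t)|) := by
    intro x t
    have hn0 := (hrange x t).1
    have hrp : (0:ℝ) ≤ n x t ^ (γ - 1) := rpow_nonneg hn0 _
    have habs : |P (x, t)| = |D (x, t)| * γ * n x t ^ (γ - 1) := by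
      simp only [hPdef, abs_mul, abs_of_nonneg hγ0.le, abs_of_nonneg hrp]
    by_cases hc : n x t ≤ 1 / 2
    · have h2 : n x t ^ (γ - 1) ≤ (2:ℝ) ^ (1 - γ) := by
        have h3 : n x t ^ (γ - 1) ≤ (1 / 2 : ℝ) ^ (γ - 1) :=
          rpow_le_rpow hn0 hc (by linarith)
        have h4 : ((1:ℝ) / 2) ^ (γ - 1) = (2:ℝ) ^ (1 - γ) := by
          rw [one_div, Real.inv_rpow (by norm_num : (0:ℝ) ≤ 2),
            ← Real.rpow_neg (by norm_num : (0:ℝ) ≤ 2), neg_sub]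
        linarith
      have h5 : |P (x, t)| ≤ γ * (2:ℝ) ^ (1 - γ) * |D (x, t)| := by
        rw [habs]
        have := mul_le_mul_of_nonneg_left h2
          (mul_nonneg (abs_nonneg (D (x, t))) hγ0.le)
        nlinarith
      have h6 : (0:ℝ) ≤ 2 * (n x t * |P (x, t)|) := by positivity
      linarith
    · push_neg at hc
      have h5 : |P (x, t)| ≤ 2 * (n x t * |P (x, t)|) := by
        nlinarith [abs_nonneg (P (x, t))]
      have h6 : (0:ℝ) ≤ γ * (2:ℝ) ^ (1 - γ) * |D (x, t)| := by positivity
      linarith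
  -- integrability machinery
  have hint : ∀ f : ℝ × EuclideanSpace ℝ (Fin d) → ℝ, Continuous f →
      Integrable f ((volume.restrict (Ioo (0:ℝ) T)).prod (volume.restrict Ω)) := by
    intro f hf
    rw [Measure.prod_restrict, ← Measure.volume_eq_prod]
    have hK : IsCompact ((Icc (0:ℝ) T) ×ˢ closure Ω) :=
      isCompact_Icc.prod hΩb.isCompact_closure
    exact (hf.continuousOn.integrableOn_compact hK).mono_set
      (Set.prod_mono Ioo_subset_Icc_self subset_closure)
  have I1 : Integrable (fun q : ℝ × EuclideanSpace ℝ (Fin d) => |D (q.2, q.1)|)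
      ((volume.restrict (Ioo (0:ℝ) T)).prod (volume.restrict Ω)) :=
    hint _ (continuous_abs.comp (hDcont.comp continuous_swap))
  have I2 : Integrable (fun q : ℝ × EuclideanSpace ℝ (Fin d) => n q.2 q.1 * |P (q.2, q.1)|)
      ((volume.restrict (Ioo (0:ℝ) T)).prod (volume.restrict Ω)) :=
    hint _ ((hC1.continuous.comp continuous_swap).mul
      (continuous_abs.comp (hPcont.comp continuous_swap)))
  have I3 : Integrable (fun q : ℝ × EuclideanSpace ℝ (Fin d) => |P (q.2, q.1)|)
      ((volume.restrict (Ioo (0:ℝ) T)).prod (volume.restrict Ω)) :=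
    hint _ (continuous_abs.comp (hPcont.comp continuous_swap))
  have J1 : Integrable (fun t => ∫ x in Ω, |D (x, t)|) (volume.restrict (Ioo (0:ℝ) T)) :=
    I1.integral_prod_left
  have J2 : Integrable (fun t => ∫ x in Ω, n x t * |P (x, t)|)
      (volume.restrict (Ioo (0:ℝ) T)) := I2.integral_prod_left
  have J3 : Integrable (fun t => ∫ x in Ω, |P (x, t)|) (volume.restrict (Ioo (0:ℝ) T)) :=
    I3.integral_prod_left
  -- integrability in x for fixed t
  have hintx : ∀ f : EuclideanSpace ℝ (Fin d) → ℝ, Continuous f → IntegrableOn f Ω := by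
    intro f hf
    exact (hf.continuousOn.integrableOn_compact hΩb.isCompact_closure).mono_set
      subset_closure
  -- inner inequality
  have h_inner : ∀ t : ℝ, (∫ x in Ω, |P (x, t)|)
      ≤ γ * (2:ℝ) ^ (1 - γ) * (∫ x in Ω, |D (x, t)|)
        + 2 * (∫ x in Ω, n x t * |P (x, t)|) := by
    intro t
    have hi1 : IntegrableOn (fun x => |D (x, t)|) Ω :=
      hintx _ (continuous_abs.comp (hDcont.comp (Continuous.prodMk_left t)))
    have hi2 : IntegrableOn (fun x => n x t * |P (x, t)|) Ω :=
      hintx _ ((hC1.continuous.comp (Continuous.prodMk_left t)).mul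
        (continuous_abs.comp (hPcont.comp (Continuous.prodMk_left t))))
    have hi3 : IntegrableOn (fun x => |P (x, t)|) Ω :=
      hintx _ (continuous_abs.comp (hPcont.comp (Continuous.prodMk_left t)))
    calc (∫ x in Ω, |P (x, t)|)
        ≤ ∫ x in Ω, (γ * (2:ℝ) ^ (1 - γ) * |D (x, t)| + 2 * (n x t * |P (x, t)|)) := by
          refine integral_mono hi3 ((hi1.const_mul _).add (hi2.const_mul _)) ?_
          intro x; exact key x t
      _ = γ * (2:ℝ) ^ (1 - γ) * (∫ x in Ω, |D (x, t)|)
            + 2 * (∫ x in Ω, n x t * |P (x, t)|) := by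
          rw [integral_add (hi1.const_mul _) (hi2.const_mul _),
            integral_const_mul, integral_const_mul]
  -- outer inequality
  have houter : (∫ t in Ioo (0:ℝ) T, ∫ x in Ω, |P (x, t)|)
      ≤ ∫ t in Ioo (0:ℝ) T, (γ * (2:ℝ) ^ (1 - γ) * (∫ x in Ω, |D (x, t)|)
          + 2 * (∫ x in Ω, n x t * |P (x, t)|)) :=
    integral_mono J3 ((J1.const_mul _).add (J2.const_mul _)) h_inner
  have hsplit : (∫ t in Ioo (0:ℝ) T, (γ * (2:ℝ) ^ (1 - γ) * (∫ x in Ω, |D (x, t)|)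
          + 2 * (∫ x in Ω, n x t * |P (x, t)|)))
      = γ * (2:ℝ) ^ (1 - γ) * (∫ t in Ioo (0:ℝ) T, ∫ x in Ω, |D (x, t)|)
        + 2 * (∫ t in Ioo (0:ℝ) T, ∫ x in Ω, n x t * |P (x, t)|) := by
    rw [integral_add (J1.const_mul _) (J2.const_mul _),
      integral_const_mul, integral_const_mul]
  have hc0 : (0:ℝ) ≤ γ * (2:ℝ) ^ (1 - γ) := by positivity
  have hb1 : γ * (2:ℝ) ^ (1 - γ) * (∫ t in Ioo (0:ℝ) T, ∫ x in Ω, |D (x, t)|)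
      ≤ γ * (2:ℝ) ^ (1 - γ) * C₀ := mul_le_mul_of_nonneg_left hdtn hc0
  have hb2 : 2 * (∫ t in Ioo (0:ℝ) T, ∫ x in Ω, n x t * |P (x, t)|) ≤ 2 * C₀ := by
    linarith
  linarith [houter, hsplit]
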